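/- Let 0 < T⁻ ≤ 1 ≤ T⁺ with T⁺ - 1 - ln T⁺ = T⁻ - 1 - ln T⁻, and let c_k ≥ 0 (k=1,…,N) with ∑ c_k > 0. Define A(T,t) = ∑_k (1 + (T-1)e^{-2μ_k t}) c_k (μ_k > 0) and D(T,t) = (3/2)·[A(T,t)/A(1,0) - 1 - ln(A(T,t)/A(1,0))]. Then D(T⁺, t) ≥ D(T⁻, t) for all t ≥ 0. -/

import Mathlib

open Real Set

lemma core_ineq (s a b : ℝ) (hs0 : 0 < s) (hs1 : s ≤ 1) (ha : 0 ≤ a)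
    (hb1 : -1 < b) (hb : b ≤ 0)
    (hab : a - Real.log (1 + a) = b - Real.log (1 + b)) :
    a * s - Real.log (1 + a * s) ≥ b * s - Real.log (1 + b * s) := by
  -- F x = x/s - log(1+x*s)/s^2 - x + log(1+x) is monotone on [b, a]
  set F : ℝ → ℝ := fun x => x / s - Real.log (1 + x * s) / s ^ 2 - x + Real.log (1 + x) with hF
  have hba : b ≤ a := le_trans hb ha
  have hpos : ∀ x ∈ Icc b a, 0 < 1 + x ∧ 0 < 1 + x * s := by
    intro x hx
    have hx1 : -1 < x := lt_of_lt_of_le hb1 hx.1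
    constructor
    · linarith
    · rcases le_or_gt 0 x with h | h
      · nlinarith
      · nlinarith
  have hder : ∀ x ∈ Ioo b a, HasDerivAt F
      (1 / s - (s / (1 + x * s)) / s ^ 2 - 1 + 1 / (1 + x)) x := by
    intro x hx
    obtain ⟨h1, h2⟩ := hpos x ⟨le_of_lt hx.1, le_of_lt hx.2⟩
    have d1 : HasDerivAt (fun x : ℝ => x / s) (1 / s) x := by
      simpa using (hasDerivAt_id x).div_const s
    have d2 : HasDerivAt (fun x : ℝ => 1 + x * s) s x := by
      simpa using ((hasDerivAt_id x).mul_const s).const_add 1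
    have d3 : HasDerivAt (fun x : ℝ => Real.log (1 + x * s)) (s / (1 + x * s)) x := by
      simpa using d2.log h2.ne'
    have d4 : HasDerivAt (fun x : ℝ => Real.log (1 + x)) (1 / (1 + x)) x := by
      have : HasDerivAt (fun x : ℝ => 1 + x) 1 x := by
        simpa using (hasDerivAt_id x).const_add 1
      simpa using this.log h1.ne'
    exact ((d1.sub (d3.div_const (s ^ 2))).sub (hasDerivAt_id x)).add d4
  have hmono : MonotoneOn F (Icc b a) := by
    apply monotoneOn_of_deriv_nonneg (convex_Icc b a)
    · apply ContinuousOn.add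
      apply ContinuousOn.sub
      apply ContinuousOn.sub
      · exact (continuousOn_id.div_const s)
      · exact ((Real.continuousOn_log.comp (by fun_prop)
          (fun x hx => (hpos x hx).2.ne')).div_const (s ^ 2))
      · exact continuousOn_id
      · exact Real.continuousOn_log.comp (by fun_prop)
          (fun x hx => (hpos x hx).1.ne')
    · intro x hx
      rw [interior_Icc] at hx
      exact ((hder x hx).differentiableAt).differentiableWithinAt
    · intro x hx
      rw [interior_Icc] at hx
      rw [(hder x hx).deriv]
      obtain ⟨h1, h2⟩ := hpos x ⟨le_of_lt hx.1, le_of_lt hx.2⟩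
      have key : 1 / s - (s / (1 + x * s)) / s ^ 2 - 1 + 1 / (1 + x)
          = x ^ 2 * (1 - s) / ((1 + x * s) * (1 + x)) := by
        have : 1 + s * x ≠ 0 := by nlinarith
        field_simp
        ring
      rw [key]
      apply div_nonneg
      · nlinarith
      · positivity
  have hFb : F b ≤ F a := hmono (by exact ⟨le_refl b, hba⟩) ⟨hba, le_refl a⟩ hba
  have hs2 : (0:ℝ) < s ^ 2 := by positivity
  have hd : 0 ≤ F a - F b := by linarith
  have h0 : (a - Real.log (1 + a)) - (b - Real.log (1 + b)) = 0 := by linarith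
  have key2 : ((a * s - Real.log (1 + a * s)) - (b * s - Real.log (1 + b * s)))
      - s ^ 2 * ((a - Real.log (1 + a)) - (b - Real.log (1 + b))) = s ^ 2 * (F a - F b) := by
    simp only [hF]
    field_simp
    ring
  rw [h0, mul_zero, sub_zero] at key2
  have hnn : 0 ≤ s ^ 2 * (F a - F b) := mul_nonneg hs2.le hd
  linarith

theorem nonMarkovian_uphill_faster (Tm Tp : ℝ) (hTm : 0 < Tm) (hTm1 : Tm ≤ 1)
    (hTp1 : 1 ≤ Tp)
    (heq : Tp - 1 - Real.log Tp = Tm - 1 - Real.log Tm)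
    (N : ℕ) (c μ : Fin N → ℝ) (hc : ∀ k, 0 ≤ c k) (hcsum : 0 < ∑ k, c k)
    (hμ : ∀ k, 0 < μ k) :
    ∀ t : ℝ, 0 ≤ t →
      (3 / 2 : ℝ) *
          ((∑ k, (1 + (Tp - 1) * Real.exp (-2 * μ k * t)) * c k) / (∑ k, c k) - 1 -
            Real.log ((∑ k, (1 + (Tp - 1) * Real.exp (-2 * μ k * t)) * c k) / (∑ k, c k))) ≥
      (3 / 2 : ℝ) *
          ((∑ k, (1 + (Tm - 1) * Real.exp (-2 * μ k * t)) * c k) / (∑ k, c k) - 1 -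
            Real.log ((∑ k, (1 + (Tm - 1) * Real.exp (-2 * μ k * t)) * c k) / (∑ k, c k))) := by
  intro t ht
  set S : ℝ := ∑ k, c k with hS
  set E : ℝ := ∑ k, Real.exp (-2 * μ k * t) * c k with hE
  have hEpos : 0 < E := by
    obtain ⟨k0, hk0⟩ : ∃ k, 0 < c k := by
      by_contra h
      push_neg at h
      have : S ≤ 0 := Finset.sum_nonpos (fun k _ => h k)
      linarith
    apply Finset.sum_pos'
    · intro k _
      exact mul_nonneg (Real.exp_pos _).le (hc k)
    · exact ⟨k0, Finset.mem_univ k0, mul_pos (Real.exp_pos _) hk0⟩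
  have hES : E ≤ S := by
    apply Finset.sum_le_sum
    intro k _
    have : Real.exp (-2 * μ k * t) ≤ 1 := by
      rw [Real.exp_le_one_iff]
      nlinarith [hμ k]
    nlinarith [hc k, (Real.exp_pos (-2 * μ k * t)).le]
  set s : ℝ := E / S with hs
  have hs0 : 0 < s := div_pos hEpos hcsum
  have hs1 : s ≤ 1 := (div_le_one hcsum).2 hES
  have expand : ∀ T : ℝ,
      (∑ k, (1 + (T - 1) * Real.exp (-2 * μ k * t)) * c k) / S = 1 + (T - 1) * s := by
    intro T
    have : (∑ k, (1 + (T - 1) * Real.exp (-2 * μ k * t)) * c k)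
        = S + (T - 1) * E := by
      rw [hS, hE, Finset.mul_sum, ← Finset.sum_add_distrib]
      apply Finset.sum_congr rfl
      intro k _
      ring
    rw [this, hs]
    field_simp
  rw [expand Tp, expand Tm]
  have hab : (Tp - 1) - Real.log (1 + (Tp - 1)) = (Tm - 1) - Real.log (1 + (Tm - 1)) := by
    have e1 : (1 : ℝ) + (Tp - 1) = Tp := by ring
    have e2 : (1 : ℝ) + (Tm - 1) = Tm := by ring
    rw [e1, e2]
    linarith
  have key := core_ineq s (Tp - 1) (Tm - 1) hs0 hs1 (by linarith) (by linarith) (by linarith) hab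
  have e3 : 1 + (Tp - 1) * s - 1 = (Tp - 1) * s := by ring
  have e4 : 1 + (Tm - 1) * s - 1 = (Tm - 1) * s := by ring
  linarith
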